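/- For n ≥ 4, the gp-chromatic number of the Cartesian product P_4 □ P_n equals n + 1. -/

import Mathlib

open SimpleGraph

/-- A set `S` is in general position: no shortest path contains more than two vertices of `S`. -/
def IsGenPosSet {V : Type*} (G : SimpleGraph V) (S : Set V) : Prop :=
  ∀ ⦃u v : V⦄ (p : G.Walk u v), p.IsPath → p.length = G.dist u v →
    ∀ x y z, x ∈ S → y ∈ S → z ∈ S →
      x ∈ p.support → y ∈ p.support → z ∈ p.support →
      x = y ∨ y = z ∨ x = z

/-- `G` can be coloured with `k` colours so that every colour class is in general position. -/
def GpColorable {V : Type*} (G : SimpleGraph V) (k : ℕ) : Prop :=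
  ∃ c : V → Fin k, ∀ i, IsGenPosSet G {v | c v = i}

/-- The gp-chromatic number: least number of colours in a colouring whose classes are
general position sets. -/
noncomputable def gpChromatic {V : Type*} (G : SimpleGraph V) : ℕ :=
  sInf {k | GpColorable G k}


/-- walk in a path graph realizing Nat.dist -/
lemma pg_walk {m : ℕ} (a c : Fin m) :
    ∃ w : (pathGraph m).Walk a c, w.length = Nat.dist a.val c.val := by
  generalize hk : Nat.dist a.val c.val = k
  induction k generalizing a with
  | zero =>
    have : a = c := by
      apply Fin.ext
      simp [Nat.dist] at hk; omega
    subst this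
    exact ⟨Walk.nil, rfl⟩
  | succ k ih =>
    rcases lt_or_ge a.val c.val with h | h
    · have hlt : a.val + 1 < m := by omega
      set a' : Fin m := ⟨a.val + 1, hlt⟩ with ha'
      have hadj : (pathGraph m).Adj a a' := by
        rw [pathGraph_adj]; left; rfl
      obtain ⟨w, hw⟩ := ih a' (by show Nat.dist (a.val + 1) c.val = k; unfold Nat.dist at hk ⊢; omega)
      exact ⟨Walk.cons hadj w, by simp [hw]⟩
    · have h' : c.val < a.val := by simp [Nat.dist] at hk; omega
      have hlt : a.val - 1 < m := by omega
      set a' : Fin m := ⟨a.val - 1, hlt⟩ with ha'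
      have hadj : (pathGraph m).Adj a a' := by
        rw [pathGraph_adj]; right; show a.val - 1 + 1 = a.val; omega
      obtain ⟨w, hw⟩ := ih a' (by show Nat.dist (a.val - 1) c.val = k; unfold Nat.dist at hk ⊢; omega)
      exact ⟨Walk.cons hadj w, by simp [hw]⟩

lemma grid_walk_ge {m n : ℕ} {u v : Fin m × Fin n}
    (w : (pathGraph m □ pathGraph n).Walk u v) :
    Nat.dist u.1.val v.1.val + Nat.dist u.2.val v.2.val ≤ w.length := by
  induction w with
  | nil => simp [Nat.dist]
  | cons h w ih =>
    rw [boxProd_adj] at h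
    rcases h with ⟨h1, h2⟩ | ⟨h1, h2⟩ <;> rw [pathGraph_adj] at h1 <;>
      [ (have h2' : _ = _ := congrArg Fin.val h2);
        (have h2' : _ = _ := congrArg Fin.val h2) ] <;>
      simp only [Walk.length_cons] <;> simp [Nat.dist] at * <;> omega

lemma grid_conn {m n : ℕ} (hm : 0 < m) (hn : 0 < n) :
    (pathGraph m □ pathGraph n).Connected := by
  have : Nonempty (Fin m × Fin n) := ⟨⟨⟨0, hm⟩, ⟨0, hn⟩⟩⟩
  exact ⟨(pathGraph_preconnected m).boxProd (pathGraph_preconnected n)⟩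

lemma grid_dist {m n : ℕ} (u v : Fin m × Fin n) :
    (pathGraph m □ pathGraph n).dist u v
      = Nat.dist u.1.val v.1.val + Nat.dist u.2.val v.2.val := by
  apply le_antisymm
  · obtain ⟨w1, hw1⟩ := pg_walk u.1 v.1
    obtain ⟨w2, hw2⟩ := pg_walk u.2 v.2
    have := SimpleGraph.dist_le ((w1.boxProdLeft _ u.2).append (w2.boxProdRight (pathGraph m) v.1))
    rw [Walk.length_append, show (w1.boxProdLeft (pathGraph n) u.2).length = w1.length from Walk.length_map _ _,
      show (w2.boxProdRight (pathGraph m) v.1).length = w2.length from Walk.length_map _ _, hw1, hw2] at this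
    exact this
  · have hm : 0 < m := u.1.pos
    have hn : 0 < n := u.2.pos
    obtain ⟨w, hw⟩ := (grid_conn hm hn).exists_walk_length_eq_dist u v
    rw [← hw]; exact grid_walk_ge w

section general
variable {V : Type*} [DecidableEq V] {G : SimpleGraph V} {u v x y z : V}

lemma geo_split (hc : G.Connected) (w : G.Walk u v) (hw : w.length = G.dist u v)
    (hx : x ∈ w.support) :
    (w.takeUntil x hx).length = G.dist u x ∧ (w.dropUntil x hx).length = G.dist x v := by
  have h1 := SimpleGraph.dist_le (w.takeUntil x hx)
  have h2 := SimpleGraph.dist_le (w.dropUntil x hx)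
  have h3 : (w.takeUntil x hx).length + (w.dropUntil x hx).length = w.length := by
    conv_rhs => rw [← w.take_spec hx]
    rw [Walk.length_append]
  have tri := hc.dist_triangle (u := u) (v := x) (w := v)
  omega

lemma geo_point (hc : G.Connected) (w : G.Walk u v) (hw : w.length = G.dist u v)
    (hx : x ∈ w.support) : G.dist u x + G.dist x v = G.dist u v := by
  obtain ⟨h1, h2⟩ := geo_split hc w hw hx
  have h3 : (w.takeUntil x hx).length + (w.dropUntil x hx).length = w.length := by
    conv_rhs => rw [← w.take_spec hx]
    rw [Walk.length_append]
  omega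

lemma geo_pair (hc : G.Connected) (w : G.Walk u v) (hw : w.length = G.dist u v)
    (hx : x ∈ w.support) (hy : y ∈ w.support) :
    G.dist u x + G.dist x y + G.dist y v = G.dist u v ∨
    G.dist u y + G.dist y x + G.dist x v = G.dist u v := by
  obtain ⟨h1, h2⟩ := geo_split hc w hw hx
  have hy' : y ∈ (w.takeUntil x hx).support ∨ y ∈ (w.dropUntil x hx).support := by
    conv at hy => rw [← w.take_spec hx]
    rw [Walk.support_append, List.mem_append] at hy
    exact hy.imp id fun h => List.mem_of_mem_tail h
  have h4 := geo_point hc w hw hx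
  rcases hy' with h | h
  · right
    have := geo_point hc _ h1 h
    omega
  · left
    have := geo_point hc _ h2 h
    omega

lemma geo_R_add (hc : G.Connected) (w : G.Walk u v) (hw : w.length = G.dist u v)
    (hy : y ∈ w.support)
    (hR : G.dist u x + G.dist x y + G.dist y v = G.dist u v) :
    G.dist u x + G.dist x y = G.dist u y := by
  have h1 := geo_point hc w hw hy
  have tri := hc.dist_triangle (u := u) (v := x) (w := y)
  omega

lemma geo_trans (hc : G.Connected) (w : G.Walk u v) (hw : w.length = G.dist u v)
    (hy : y ∈ w.support) (hz : z ∈ w.support)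
    (h1 : G.dist u x + G.dist x y + G.dist y v = G.dist u v)
    (h2 : G.dist u y + G.dist y z + G.dist z v = G.dist u v) :
    G.dist x y + G.dist y z = G.dist x z := by
  have e1 := geo_R_add hc w hw hy h1
  have e2 := geo_R_add hc w hw hz h2
  have t1 := hc.dist_triangle (u := u) (v := x) (w := z)
  have t2 := hc.dist_triangle (u := x) (v := y) (w := z)
  omega

/-- one of the three points on a geodesic is metrically between the other two -/
lemma geo_middle (hc : G.Connected) (w : G.Walk u v) (hw : w.length = G.dist u v)
    (hx : x ∈ w.support) (hy : y ∈ w.support) (hz : z ∈ w.support) :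
    G.dist x y + G.dist y z = G.dist x z ∨
    G.dist y x + G.dist x z = G.dist y z ∨
    G.dist x z + G.dist z y = G.dist x y := by
  have cxy : G.dist x y = G.dist y x := SimpleGraph.dist_comm
  have cxz : G.dist x z = G.dist z x := SimpleGraph.dist_comm
  have cyz : G.dist y z = G.dist z y := SimpleGraph.dist_comm
  rcases geo_pair hc w hw hx hy with hxy | hyx
  · rcases geo_pair hc w hw hy hz with hyz | hzy
    · exact Or.inl (geo_trans hc w hw hy hz hxy hyz)
    · rcases geo_pair hc w hw hx hz with hxz | hzx
      · have := geo_trans hc w hw hz hy hxz hzy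
        right; right; omega
      · have := geo_trans hc w hw hx hy hzx hxy
        right; left; omega
  · rcases geo_pair hc w hw hy hz with hyz | hzy
    · rcases geo_pair hc w hw hx hz with hxz | hzx
      · have := geo_trans hc w hw hx hz hyx hxz
        right; left; omega
      · have := geo_trans hc w hw hz hx hyz hzx
        right; right; omega
    · have := geo_trans hc w hw hy hx hzy hyx
      left; omega
end general


/-- `y` lies (coordinatewise) between `x` and `z`. -/
def GridBtw {m n : ℕ} (x y z : Fin m × Fin n) : Prop :=
  ((x.1 : ℕ) ≤ y.1 ∧ (y.1 : ℕ) ≤ z.1 ∨ (z.1 : ℕ) ≤ y.1 ∧ (y.1 : ℕ) ≤ x.1) ∧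
  ((x.2 : ℕ) ≤ y.2 ∧ (y.2 : ℕ) ≤ z.2 ∨ (z.2 : ℕ) ≤ y.2 ∧ (y.2 : ℕ) ≤ x.2)

lemma grid_btw_iff {m n : ℕ} (x y z : Fin m × Fin n) :
    (pathGraph m □ pathGraph n).dist x y + (pathGraph m □ pathGraph n).dist y z
      = (pathGraph m □ pathGraph n).dist x z ↔ GridBtw x y z := by
  rw [grid_dist, grid_dist, grid_dist]
  unfold GridBtw
  simp only [Nat.dist]
  omega

lemma genpos_iff {m n : ℕ} (S : Set (Fin m × Fin n)) :
    IsGenPosSet (pathGraph m □ pathGraph n) S ↔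
      ∀ x ∈ S, ∀ y ∈ S, ∀ z ∈ S, GridBtw x y z → x = y ∨ y = z ∨ x = z := by
  constructor
  · intro h x hx y hy z hz hbtw
    by_contra hcon
    push_neg at hcon
    obtain ⟨hxy, hyz, hxz⟩ := hcon
    have hm : 0 < m := x.1.pos
    have hn : 0 < n := x.2.pos
    have hc := grid_conn hm hn
    set G := pathGraph m □ pathGraph n
    obtain ⟨p1, hp1, hl1⟩ := hc.exists_path_of_dist x y
    obtain ⟨p2, hp2, hl2⟩ := hc.exists_path_of_dist y z
    have hlen : (p1.append p2).length = G.dist x z := by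
      rw [Walk.length_append, hl1, hl2, (grid_btw_iff x y z).mpr hbtw]
    have hpath := (p1.append p2).isPath_of_length_eq_dist hlen
    have := h (p1.append p2) hpath hlen x y z hx hy hz
      (Walk.start_mem_support _)
      (by rw [Walk.support_append, List.mem_append]; exact Or.inl (Walk.end_mem_support p1))
      (Walk.end_mem_support _)
    tauto
  · intro h u v p hp hlen x y z hx hy hz hxs hys hzs
    have hm : 0 < m := x.1.pos
    have hn : 0 < n := x.2.pos
    have hc := grid_conn hm hn
    rcases geo_middle hc p hlen hxs hys hzs with hmid | hmid | hmid
    · have := h x hx y hy z hz ((grid_btw_iff x y z).mp hmid)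
      tauto
    · have := h y hy x hx z hz ((grid_btw_iff y x z).mp hmid)
      rcases this with h' | h' | h' <;> simp [h'] <;> tauto
    · have := h x hx z hz y hy ((grid_btw_iff x z y).mp hmid)
      rcases this with h' | h' | h' <;> simp [h'] <;> tauto

/-- the colour of the vertex in row `r`, column `j` of the `4 × n` grid. -/
def gpF (n r j : ℕ) : ℕ :=
  if r = 0 then j
  else if r = 1 then (if 2 ≤ j then j - 2 else if j = 1 then n - 1 else n)
  else if r = 2 then (if j + 2 ≤ n then j + 1 else n)
  else (if 1 ≤ j then j - 1 else n)

lemma gpF_lt {n r j : ℕ} (hj : j < n) (hn : 4 ≤ n) : gpF n r j < n + 1 := by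
  unfold gpF; split_ifs <;> omega

set_option maxHeartbeats 4000000 in
lemma gpF_classes {n : ℕ} (hn : 4 ≤ n) (r1 c1 r2 c2 r3 c3 : ℕ)
    (h1 : r1 < 4) (h2 : c1 < n) (h3 : r2 < 4) (h4 : c2 < n) (h5 : r3 < 4) (h6 : c3 < n)
    (e1 : gpF n r1 c1 = gpF n r2 c2) (e2 : gpF n r2 c2 = gpF n r3 c3)
    (hb : (r1 ≤ r2 ∧ r2 ≤ r3 ∨ r3 ≤ r2 ∧ r2 ≤ r1) ∧
          (c1 ≤ c2 ∧ c2 ≤ c3 ∨ c3 ≤ c2 ∧ c2 ≤ c1)) :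
    (r1 = r2 ∧ c1 = c2) ∨ (r2 = r3 ∧ c2 = c3) ∨ (r1 = r3 ∧ c1 = c3) := by
  unfold gpF at e1 e2
  split_ifs at e1 e2 <;> omega


lemma grid_colorable {n : ℕ} (hn : 4 ≤ n) :
    GpColorable (pathGraph 4 □ pathGraph n) (n + 1) := by
  refine ⟨fun v => ⟨gpF n v.1 v.2, gpF_lt v.2.isLt hn⟩, fun i => ?_⟩
  rw [genpos_iff]
  rintro x hx y hy z hz hb
  simp only [Set.mem_setOf_eq] at hx hy hz
  have e1 : gpF n x.1 x.2 = gpF n y.1 y.2 := by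
    have := hx.trans hy.symm
    exact congrArg Fin.val this
  have e2 : gpF n y.1 y.2 = gpF n z.1 z.2 := by
    have := hy.trans hz.symm
    exact congrArg Fin.val this
  obtain ⟨hbr, hbc⟩ := hb
  have := gpF_classes hn x.1 x.2 y.1 y.2 z.1 z.2
    x.1.isLt x.2.isLt y.1.isLt y.2.isLt z.1.isLt z.2.isLt e1 e2 ⟨hbr, hbc⟩
  rcases this with ⟨h1, h2⟩ | ⟨h1, h2⟩ | ⟨h1, h2⟩
  · exact Or.inl (Prod.ext (Fin.ext h1) (Fin.ext h2))
  · exact Or.inr (Or.inl (Prod.ext (Fin.ext h1) (Fin.ext h2)))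
  · exact Or.inr (Or.inr (Prod.ext (Fin.ext h1) (Fin.ext h2)))


section lower
variable {n : ℕ} {S : Set (Fin 4 × Fin n)}

lemma prod_ne_iff {x y : Fin 4 × Fin n} : x ≠ y ↔ ((x.1:ℕ) ≠ y.1 ∨ (x.2:ℕ) ≠ y.2) := by
  rw [Ne, Prod.ext_iff, Fin.ext_iff, Fin.ext_iff]
  tauto

set_option maxHeartbeats 1000000 in
lemma five_core
    (hS : ∀ x ∈ S, ∀ y ∈ S, ∀ z ∈ S, GridBtw x y z → x = y ∨ y = z ∨ x = z)
    {x y z w u : Fin 4 × Fin n}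
    (hx : x ∈ S) (hy : y ∈ S) (hz : z ∈ S) (hw : w ∈ S) (hu : u ∈ S)
    (hrow : (x.1:ℕ) = y.1) (hcol : (x.2:ℕ) < y.2)
    (hzx : z ≠ x) (hzy : z ≠ y) (hwx : w ≠ x) (hwy : w ≠ y)
    (hux : u ≠ x) (huy : u ≠ y) (hzw : z ≠ w) (hzu : z ≠ u) (hwu : w ≠ u) : False := by
  have hxy : x ≠ y := by rw [prod_ne_iff]; omega
  have win : ∀ t, t ∈ S → t ≠ x → t ≠ y → (x.2:ℕ) < t.2 ∧ (t.2:ℕ) < y.2 := by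
    intro t ht htx hty
    rcases le_or_gt (t.2:ℕ) x.2 with h1 | h1
    · rcases hS t ht x hx y hy ⟨by omega, by omega⟩ with h' | h' | h'
      · exact absurd h' htx
      · exact absurd h' hxy
      · exact absurd h' hty
    rcases lt_or_ge (t.2:ℕ) y.2 with h2 | h2
    · exact ⟨h1, h2⟩
    · rcases hS t ht y hy x hx ⟨by omega, by omega⟩ with h' | h' | h'
      · exact absurd h' hty
      · exact absurd h'.symm hxy
      · exact absurd h' htx
  have rowne : ∀ t, t ∈ S → t ≠ x → t ≠ y → (t.1:ℕ) ≠ x.1 := by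
    intro t ht htx hty hcon
    obtain ⟨w1, w2⟩ := win t ht htx hty
    rcases hS x hx t ht y hy ⟨by omega, by omega⟩ with h' | h' | h'
    · exact absurd h'.symm htx
    · exact absurd h' hty
    · exact absurd h' hxy
  have rowne2 : ∀ t t', t ∈ S → t' ∈ S → t ≠ x → t ≠ y → t' ≠ x → t' ≠ y → t ≠ t' →
      (t.1:ℕ) ≠ t'.1 := by
    intro t t' ht ht' htx hty ht'x ht'y htt' hcon
    obtain ⟨w1, w2⟩ := win t ht htx hty
    obtain ⟨w3, w4⟩ := win t' ht' ht'x ht'y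
    rcases lt_trichotomy (t.2:ℕ) (t'.2:ℕ) with h | h | h
    · rcases hS x hx t ht t' ht' ⟨by omega, by omega⟩ with h' | h' | h'
      · exact absurd h'.symm htx
      · exact absurd h' htt'
      · exact absurd h'.symm ht'x
    · exact htt' (Prod.ext (Fin.ext hcon) (Fin.ext h))
    · rcases hS x hx t' ht' t ht ⟨by omega, by omega⟩ with h' | h' | h'
      · exact absurd h'.symm ht'x
      · exact absurd h'.symm htt'
      · exact absurd h'.symm htx
  have step : ∀ p q, p ∈ S → q ∈ S → p ≠ x → p ≠ y → q ≠ x → q ≠ y → p ≠ q →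
      ((x.1:ℕ) < p.1 ∧ (p.1:ℕ) < q.1 ∨ (q.1:ℕ) < p.1 ∧ (p.1:ℕ) < x.1) → False := by
    intro p q hp hq hpx hpy hqx hqy hpq hord
    obtain ⟨w1, w2⟩ := win p hp hpx hpy
    obtain ⟨w3, w4⟩ := win q hq hqx hqy
    rcases le_or_gt (p.2:ℕ) q.2 with h | h
    · rcases hS x hx p hp q hq ⟨by omega, by omega⟩ with h' | h' | h'
      · exact absurd h'.symm hpx
      · exact absurd h' hpq
      · exact absurd h'.symm hqx
    · rcases hS y hy p hp q hq ⟨by omega, by omega⟩ with h' | h' | h'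
      · exact absurd h'.symm hpy
      · exact absurd h' hpq
      · exact absurd h'.symm hqy
  have rz := rowne z hz hzx hzy
  have rw' := rowne w hw hwx hwy
  have ru := rowne u hu hux huy
  have rzw := rowne2 z w hz hw hzx hzy hwx hwy hzw
  have rzu := rowne2 z u hz hu hzx hzy hux huy hzu
  have rwu := rowne2 w u hw hu hwx hwy hux huy hwu
  have b1 : (z.1:ℕ) < 4 := z.1.isLt
  have b2 : (w.1:ℕ) < 4 := w.1.isLt
  have b3 : (u.1:ℕ) < 4 := u.1.isLt
  have b4 : (x.1:ℕ) < 4 := x.1.isLt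
  have hdisj :
      ((x.1:ℕ) < z.1 ∧ (z.1:ℕ) < w.1 ∨ (w.1:ℕ) < z.1 ∧ (z.1:ℕ) < x.1) ∨
      ((x.1:ℕ) < z.1 ∧ (z.1:ℕ) < u.1 ∨ (u.1:ℕ) < z.1 ∧ (z.1:ℕ) < x.1) ∨
      ((x.1:ℕ) < w.1 ∧ (w.1:ℕ) < z.1 ∨ (z.1:ℕ) < w.1 ∧ (w.1:ℕ) < x.1) ∨
      ((x.1:ℕ) < w.1 ∧ (w.1:ℕ) < u.1 ∨ (u.1:ℕ) < w.1 ∧ (w.1:ℕ) < x.1) ∨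
      ((x.1:ℕ) < u.1 ∧ (u.1:ℕ) < z.1 ∨ (z.1:ℕ) < u.1 ∧ (u.1:ℕ) < x.1) ∨
      ((x.1:ℕ) < u.1 ∧ (u.1:ℕ) < w.1 ∨ (w.1:ℕ) < u.1 ∧ (u.1:ℕ) < x.1) := by
    omega
  rcases hdisj with h | h | h | h | h | h
  · exact step z w hz hw hzx hzy hwx hwy hzw h
  · exact step z u hz hu hzx hzy hux huy hzu h
  · exact step w z hw hz hwx hwy hzx hzy hzw.symm h
  · exact step w u hw hu hwx hwy hux huy hwu h
  · exact step u z hu hz hux huy hzx hzy hzu.symm h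
  · exact step u w hu hw hux huy hwx hwy hwu.symm h

lemma five_aux
    (hS : ∀ x ∈ S, ∀ y ∈ S, ∀ z ∈ S, GridBtw x y z → x = y ∨ y = z ∨ x = z)
    {x y z w u : Fin 4 × Fin n}
    (hx : x ∈ S) (hy : y ∈ S) (hz : z ∈ S) (hw : w ∈ S) (hu : u ∈ S)
    (hrow : (x.1:ℕ) = y.1) (hxy : x ≠ y)
    (hzx : z ≠ x) (hzy : z ≠ y) (hwx : w ≠ x) (hwy : w ≠ y)
    (hux : u ≠ x) (huy : u ≠ y) (hzw : z ≠ w) (hzu : z ≠ u) (hwu : w ≠ u) : False := by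
  have hne : (x.2:ℕ) ≠ y.2 := by
    rw [prod_ne_iff] at hxy; omega
  rcases hne.lt_or_gt with h | h
  · exact five_core hS hx hy hz hw hu hrow h hzx hzy hwx hwy hux huy hzw hzu hwu
  · exact five_core hS hy hx hz hw hu hrow.symm h hzy hzx hwy hwx huy hux hzw hzu hwu

lemma no_five
    (hS : ∀ x ∈ S, ∀ y ∈ S, ∀ z ∈ S, GridBtw x y z → x = y ∨ y = z ∨ x = z)
    {a b c d e : Fin 4 × Fin n}
    (ha : a ∈ S) (hb : b ∈ S) (hc : c ∈ S) (hd : d ∈ S) (he : e ∈ S)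
    (h1 : a ≠ b) (h2 : a ≠ c) (h3 : a ≠ d) (h4 : a ≠ e) (h5 : b ≠ c)
    (h6 : b ≠ d) (h7 : b ≠ e) (h8 : c ≠ d) (h9 : c ≠ e) (h10 : d ≠ e) : False := by
  have b1 : (a.1:ℕ) < 4 := a.1.isLt
  have b2 : (b.1:ℕ) < 4 := b.1.isLt
  have b3 : (c.1:ℕ) < 4 := c.1.isLt
  have b4 : (d.1:ℕ) < 4 := d.1.isLt
  have b5 : (e.1:ℕ) < 4 := e.1.isLt
  have hdisj : (a.1:ℕ) = b.1 ∨ (a.1:ℕ) = c.1 ∨ (a.1:ℕ) = d.1 ∨ (a.1:ℕ) = e.1 ∨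
      (b.1:ℕ) = c.1 ∨ (b.1:ℕ) = d.1 ∨ (b.1:ℕ) = e.1 ∨ (c.1:ℕ) = d.1 ∨
      (c.1:ℕ) = e.1 ∨ (d.1:ℕ) = e.1 := by omega
  rcases hdisj with h | h | h | h | h | h | h | h | h | h
  · exact five_aux hS ha hb hc hd he h h1 h2.symm h5.symm h3.symm h6.symm h4.symm h7.symm h8 h9 h10
  · exact five_aux hS ha hc hb hd he h h2 h1.symm h5 h3.symm h8.symm h4.symm h9.symm h6 h7 h10
  · exact five_aux hS ha hd hb hc he h h3 h1.symm h6 h2.symm h8 h4.symm h10.symm h5 h7 h9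
  · exact five_aux hS ha he hb hc hd h h4 h1.symm h7 h2.symm h9 h3.symm h10 h5 h6 h8
  · exact five_aux hS hb hc ha hd he h h5 h1 h2 h6.symm h8.symm h7.symm h9.symm h3 h4 h10
  · exact five_aux hS hb hd ha hc he h h6 h1 h3 h5.symm h8 h7.symm h10.symm h2 h4 h9
  · exact five_aux hS hb he ha hc hd h h7 h1 h4 h5.symm h9 h6.symm h10 h2 h3 h8
  · exact five_aux hS hc hd ha hb he h h8 h2 h3 h5 h6 h9.symm h10.symm h1 h4 h7
  · exact five_aux hS hc he ha hb hd h h9 h2 h4 h5 h7 h8.symm h10 h1 h3 h6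
  · exact five_aux hS hd he ha hb hc h h10 h3 h4 h6 h7 h8 h9 h1 h2 h5

set_option maxHeartbeats 1000000 in
lemma no_corner_four
    (hS : ∀ x ∈ S, ∀ y ∈ S, ∀ z ∈ S, GridBtw x y z → x = y ∨ y = z ∨ x = z)
    {o p q r : Fin 4 × Fin n}
    (ho : o ∈ S) (hp : p ∈ S) (hq : q ∈ S) (hr : r ∈ S)
    (ho1 : (o.1:ℕ) = 0) (ho2 : (o.2:ℕ) = 0)
    (hpo : p ≠ o) (hqo : q ≠ o) (hro : r ≠ o)
    (hpq : p ≠ q) (hpr : p ≠ r) (hqr : q ≠ r) : False := by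
  have incomp : ∀ s t, s ∈ S → t ∈ S → s ≠ o → t ≠ o → s ≠ t →
      ¬((s.1:ℕ) ≤ t.1 ∧ (s.2:ℕ) ≤ t.2) := by
    intro s t hs ht hso hto hst hcon
    rcases hS o ho s hs t ht ⟨by omega, by omega⟩ with h' | h' | h'
    · exact absurd h'.symm hso
    · exact absurd h' hst
    · exact absurd h'.symm hto
  have i1 := incomp p q hp hq hpo hqo hpq
  have i2 := incomp q p hq hp hqo hpo hpq.symm
  have i3 := incomp p r hp hr hpo hro hpr
  have i4 := incomp r p hr hp hro hpo hpr.symm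
  have i5 := incomp q r hq hr hqo hro hqr
  have i6 := incomp r q hr hq hro hqo hqr.symm
  have step : ∀ s t w, s ∈ S → t ∈ S → w ∈ S → s ≠ o → t ≠ o → w ≠ o →
      s ≠ t → t ≠ w → s ≠ w → (s.1:ℕ) < t.1 → (t.1:ℕ) < w.1 → False := by
    intro s t w hs ht hw hso hto hwo hst htw hsw hlt1 hlt2
    have j1 := incomp s t hs ht hso hto hst
    have j2 := incomp t w ht hw hto hwo htw
    rcases hS s hs t ht w hw ⟨by omega, by omega⟩ with h' | h' | h'
    · exact absurd h' hst
    · exact absurd h' htw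
    · exact absurd h' hsw
  have d1 : (p.1:ℕ) ≠ q.1 := by
    intro h
    rw [prod_ne_iff] at hpq
    omega
  have d2 : (p.1:ℕ) ≠ r.1 := by
    intro h
    rw [prod_ne_iff] at hpr
    omega
  have d3 : (q.1:ℕ) ≠ r.1 := by
    intro h
    rw [prod_ne_iff] at hqr
    omega
  have hdisj : ((p.1:ℕ) < q.1 ∧ (q.1:ℕ) < r.1) ∨ ((p.1:ℕ) < r.1 ∧ (r.1:ℕ) < q.1) ∨
      ((q.1:ℕ) < p.1 ∧ (p.1:ℕ) < r.1) ∨ ((q.1:ℕ) < r.1 ∧ (r.1:ℕ) < p.1) ∨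
      ((r.1:ℕ) < p.1 ∧ (p.1:ℕ) < q.1) ∨ ((r.1:ℕ) < q.1 ∧ (q.1:ℕ) < p.1) := by omega
  rcases hdisj with ⟨k1, k2⟩ | ⟨k1, k2⟩ | ⟨k1, k2⟩ | ⟨k1, k2⟩ | ⟨k1, k2⟩ | ⟨k1, k2⟩
  · exact step p q r hp hq hr hpo hqo hro hpq hqr hpr k1 k2
  · exact step p r q hp hr hq hpo hro hqo hpr hqr.symm hpq k1 k2
  · exact step q p r hq hp hr hqo hpo hro hpq.symm hpr hqr k1 k2
  · exact step q r p hq hr hp hqo hro hpo hqr hpr.symm hpq.symm k1 k2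
  · exact step r p q hr hp hq hro hpo hqo hpr.symm hpq hqr.symm k1 k2
  · exact step r q p hr hq hp hro hqo hpo hqr.symm hpq.symm hpr.symm k1 k2
end lower
lemma extract3 {α : Type*} [DecidableEq α] {s : Finset α} (h : 3 ≤ s.card) :
    ∃ a b c, a ∈ s ∧ b ∈ s ∧ c ∈ s ∧ a ≠ b ∧ a ≠ c ∧ b ≠ c := by
  obtain ⟨a, ha⟩ := Finset.card_pos.mp (show 0 < s.card by omega)
  have h2 : 1 ≤ (s.erase a).card := by rw [Finset.card_erase_of_mem ha]; omega
  obtain ⟨b, hb⟩ := Finset.card_pos.mp (show 0 < (s.erase a).card by omega)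
  have h1 : 1 ≤ ((s.erase a).erase b).card := by
    rw [Finset.card_erase_of_mem hb, Finset.card_erase_of_mem ha]; omega
  obtain ⟨c, hcm⟩ := Finset.card_pos.mp (show 0 < ((s.erase a).erase b).card by omega)
  exact ⟨a, b, c, ha, Finset.mem_of_mem_erase hb,
    Finset.mem_of_mem_erase (Finset.mem_of_mem_erase hcm),
    (Finset.ne_of_mem_erase hb).symm,
    (Finset.ne_of_mem_erase (Finset.mem_of_mem_erase hcm)).symm,
    (Finset.ne_of_mem_erase hcm).symm⟩

lemma extract5 {α : Type*} [DecidableEq α] {s : Finset α} (h : 5 ≤ s.card) :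
    ∃ a b c d e, a ∈ s ∧ b ∈ s ∧ c ∈ s ∧ d ∈ s ∧ e ∈ s ∧
      a ≠ b ∧ a ≠ c ∧ a ≠ d ∧ a ≠ e ∧ b ≠ c ∧ b ≠ d ∧ b ≠ e ∧ c ≠ d ∧ c ≠ e ∧ d ≠ e := by
  obtain ⟨a, ha⟩ := Finset.card_pos.mp (show 0 < s.card by omega)
  have h2 : 3 ≤ (s.erase a).card := by rw [Finset.card_erase_of_mem ha]; omega
  obtain ⟨b, hb⟩ := Finset.card_pos.mp (show 0 < (s.erase a).card by omega)
  have h3 : 3 ≤ ((s.erase a).erase b).card := by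
    rw [Finset.card_erase_of_mem hb, Finset.card_erase_of_mem ha]; omega
  obtain ⟨c, d, e, hcm, hdm, hem, hcd, hce, hde⟩ := extract3 h3
  have hcs : c ∈ s := Finset.mem_of_mem_erase (Finset.mem_of_mem_erase hcm)
  have hds : d ∈ s := Finset.mem_of_mem_erase (Finset.mem_of_mem_erase hdm)
  have hes : e ∈ s := Finset.mem_of_mem_erase (Finset.mem_of_mem_erase hem)
  refine ⟨a, b, c, d, e, ha, Finset.mem_of_mem_erase hb, hcs, hds, hes,
    (Finset.ne_of_mem_erase hb).symm, ?_, ?_, ?_, ?_, ?_, ?_, hcd, hce, hde⟩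
  · exact (Finset.ne_of_mem_erase (Finset.mem_of_mem_erase hcm)).symm
  · exact (Finset.ne_of_mem_erase (Finset.mem_of_mem_erase hdm)).symm
  · exact (Finset.ne_of_mem_erase (Finset.mem_of_mem_erase hem)).symm
  · exact (Finset.ne_of_mem_erase hcm).symm
  · exact (Finset.ne_of_mem_erase hdm).symm
  · exact (Finset.ne_of_mem_erase hem).symm

lemma gp_mono {V : Type*} (G : SimpleGraph V) {k l : ℕ}
    (h : GpColorable G k) (hkl : k ≤ l) : GpColorable G l := by
  obtain ⟨c, hc⟩ := h
  refine ⟨fun v => (c v).castLE hkl, fun i => ?_⟩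
  intro u v p hp hl x y z hx hy hz hxs hys hzs
  simp only [Set.mem_setOf_eq] at hx hy hz
  have hy' : c y = c x := Fin.castLE_injective hkl (hy.trans hx.symm)
  have hz' : c z = c x := Fin.castLE_injective hkl (hz.trans hx.symm)
  exact hc (c x) p hp hl x y z rfl hy' hz' hxs hys hzs

lemma not_colorable {n : ℕ} (hn : 4 ≤ n) :
    ¬ GpColorable (pathGraph 4 □ pathGraph n) n := by
  rintro ⟨c, hc⟩
  have hchar : ∀ i, ∀ x ∈ {v | c v = i}, ∀ y ∈ {v | c v = i}, ∀ z ∈ {v | c v = i},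
      GridBtw x y z → x = y ∨ y = z ∨ x = z := fun i => (genpos_iff _).mp (hc i)
  classical
  set fib : Fin n → Finset (Fin 4 × Fin n) :=
    fun i => Finset.univ.filter (fun v => c v = i) with hfib
  have hmem : ∀ i v, v ∈ fib i → v ∈ {w | c w = i} := by
    intro i v hv
    simp only [hfib, Finset.mem_filter] at hv
    exact hv.2
  have hcard : ∀ i, (fib i).card ≤ 4 := by
    intro i
    by_contra hgt
    push_neg at hgt
    obtain ⟨a, b, c', d, e, ha, hb, hc', hd, he, h1, h2, h3, h4, h5, h6, h7, h8, h9, h10⟩ :=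
      extract5 (show 5 ≤ (fib i).card by omega)
    exact no_five (hchar i) (hmem i a ha) (hmem i b hb) (hmem i c' hc') (hmem i d hd)
      (hmem i e he) h1 h2 h3 h4 h5 h6 h7 h8 h9 h10
  set o : Fin 4 × Fin n := (⟨0, by omega⟩, ⟨0, by omega⟩) with ho
  set i0 := c o with hi0
  have homem : o ∈ fib i0 := by simp [hfib, hi0]
  have hc3 : (fib i0).card ≤ 3 := by
    by_contra hgt
    push_neg at hgt
    have h3' : 3 ≤ ((fib i0).erase o).card := by
      rw [Finset.card_erase_of_mem homem]; omega
    obtain ⟨p, q, r, hp, hq, hr, hpq, hpr, hqr⟩ := extract3 h3'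
    exact no_corner_four (hchar i0) (hmem i0 o homem)
      (hmem i0 p (Finset.mem_of_mem_erase hp)) (hmem i0 q (Finset.mem_of_mem_erase hq))
      (hmem i0 r (Finset.mem_of_mem_erase hr)) rfl rfl
      (Finset.ne_of_mem_erase hp) (Finset.ne_of_mem_erase hq) (Finset.ne_of_mem_erase hr)
      hpq hpr hqr
  have hsum : ∑ i, (fib i).card = 4 * n := by
    have := Finset.card_eq_sum_card_fiberwise
      (f := c) (s := (Finset.univ : Finset (Fin 4 × Fin n))) (t := Finset.univ)
      (fun x _ => Finset.mem_univ (c x))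
    simp only [Finset.card_univ, Fintype.card_prod, Fintype.card_fin] at this
    rw [← this]
  have hsplit : (fib i0).card + ∑ i ∈ Finset.univ.erase i0, (fib i).card
      = ∑ i, (fib i).card :=
    Finset.add_sum_erase Finset.univ (fun i => (fib i).card) (Finset.mem_univ i0)
  have hrest : ∑ i ∈ Finset.univ.erase i0, (fib i).card ≤ 4 * (n - 1) := by
    calc ∑ i ∈ Finset.univ.erase i0, (fib i).card
        ≤ ∑ _i ∈ Finset.univ.erase i0, 4 := Finset.sum_le_sum fun i _ => hcard i
      _ = 4 * (n - 1) := by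
          rw [Finset.sum_const, Finset.card_erase_of_mem (Finset.mem_univ i0)]
          simp [mul_comm]
  omega

theorem gpChromatic_P4_boxProd_Pn (n : ℕ) (hn : 4 ≤ n) :
    gpChromatic (pathGraph 4 □ pathGraph n) = n + 1 := by
  have h1 : GpColorable (pathGraph 4 □ pathGraph n) (n + 1) := grid_colorable hn
  apply le_antisymm (Nat.sInf_le h1)
  apply le_csInf ⟨n + 1, show _ ∈ {k | GpColorable _ k} from h1⟩
  intro k hk
  by_contra hlt
  push_neg at hlt
  exact not_colorable hn (gp_mono _ hk (by omega))
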